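/- The ℝ^k-action (τ_h) on M = N × ℝ^k is free if and only if for every x ∈ N and every T > 0 with φ_T(x) = x one has (1/T)·∫_0^T α(w(φ_s(x))) ds ≠ −1. -/

import Mathlib

open MeasureTheory

/-- The action of `h ∈ ℝ^k` on `M = N × ℝ^k`:
`τ_h(x, v) = (φ_{α(h)}(x), v + h + ∫_0^{α(h)} w(φ_s(x)) ds)`. -/
noncomputable def tauAct {N : Type*} {k : ℕ} (φ : ℝ → N → N)
    (w : N → EuclideanSpace ℝ (Fin k)) (α : EuclideanSpace ℝ (Fin k) →ₗ[ℝ] ℝ)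
    (h : EuclideanSpace ℝ (Fin k)) (z : N × EuclideanSpace ℝ (Fin k)) :
    N × EuclideanSpace ℝ (Fin k) :=
  (φ (α h) z.1, z.2 + h + ∫ s in (0:ℝ)..(α h), w (φ s z.1))

/-- The `ℝ^k`-action `(τ_h)` on `M = N × ℝ^k` is free if and only if for every `x ∈ N`
and every `T > 0` with `φ_T(x) = x` one has `(1/T)·∫_0^T α(w(φ_s(x))) ds ≠ −1`. -/
theorem stmt0 {N : Type*} [TopologicalSpace N] {k : ℕ} (hk : 1 ≤ k)
    (φ : ℝ → N → N) (hφcont : Continuous fun p : ℝ × N => φ p.1 p.2)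
    (hφ0 : ∀ x, φ 0 x = x) (hφadd : ∀ t s x, φ (t + s) x = φ t (φ s x))
    (w : N → EuclideanSpace ℝ (Fin k)) (hw : Continuous w)
    (α : EuclideanSpace ℝ (Fin k) →ₗ[ℝ] ℝ) :
    (∀ (h : EuclideanSpace ℝ (Fin k)) (z : N × EuclideanSpace ℝ (Fin k)),
        tauAct φ w α h z = z → h = 0) ↔
    (∀ x : N, ∀ T : ℝ, 0 < T → φ T x = x →
        (1 / T) * ∫ s in (0:ℝ)..T, α (w (φ s x)) ≠ -1) := by
  have hcontw : ∀ x : N, Continuous fun s : ℝ => w (φ s x) := fun x =>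
    hw.comp (hφcont.comp (continuous_id.prodMk continuous_const))
  set L := LinearMap.toContinuousLinearMap α with hL
  have hLα : ∀ v, L v = α v := fun v => rfl
  have hαint : ∀ (x : N) (a b : ℝ),
      α (∫ s in a..b, w (φ s x)) = ∫ s in a..b, α (w (φ s x)) := by
    intro x a b
    exact (L.intervalIntegral_comp_comm ((hcontw x).intervalIntegrable a b)).symm
  constructor
  · intro hfree x T hT hTx hcontra
    have hTne : T ≠ 0 := ne_of_gt hT
    have hint : ∫ s in (0:ℝ)..T, α (w (φ s x)) = -T := by
      field_simp at hcontra
      linarith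
    set h : EuclideanSpace ℝ (Fin k) := -∫ s in (0:ℝ)..T, w (φ s x) with hh
    have hαh : α h = T := by
      rw [hh, map_neg, hαint, hint, neg_neg]
    have hfix : tauAct φ w α h (x, (0 : EuclideanSpace ℝ (Fin k))) = (x, 0) := by
      rw [tauAct, Prod.mk.injEq]
      refine ⟨by rw [hαh]; exact hTx, ?_⟩
      rw [hαh, hh]; abel
    have h0 : h = 0 := hfree h (x, 0) hfix
    rw [h0, map_zero] at hαh
    exact hTne hαh.symm
  · intro hcond h z hz
    obtain ⟨x, v⟩ := z
    rw [tauAct, Prod.mk.injEq] at hz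
    obtain ⟨hz1, hz2⟩ := hz
    have hh : h = -∫ s in (0:ℝ)..(α h), w (φ s x) := by
      have : v + (h + ∫ s in (0:ℝ)..(α h), w (φ s x)) = v + 0 := by
        rw [add_zero, ← add_assoc]; exact hz2
      have h2 := add_left_cancel this
      linear_combination (norm := module) h2
    have hαh : α h = -∫ s in (0:ℝ)..(α h), α (w (φ s x)) := by
      conv_lhs => rw [hh]
      rw [map_neg, hαint]
    rcases lt_trichotomy (α h) 0 with hc | hc | hc
    · exfalso
      set c := α h with hcdef
      have hx : φ (-c) x = x := by
        have := congrArg (φ (-c)) hz1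
        rw [← hφadd, neg_add_cancel, hφ0] at this
        exact this.symm
      have hg : Function.Periodic (fun s => α (w (φ s x))) (-c) := by
        intro s
        simp only [hφadd, hx]
      have key : ∫ s in (0:ℝ)..(-c), α (w (φ s x)) = -∫ s in (0:ℝ)..c, α (w (φ s x)) := by
        have h1 := hg.intervalIntegral_add_eq c 0
        rw [add_neg_cancel, zero_add] at h1
        rw [← h1, intervalIntegral.integral_symm]
      have hcond' := hcond x (-c) (by linarith) hx
      apply hcond'
      rw [key, ← hαh]
      field_simp
      rw [div_self hc.ne]
    · rw [hh, hc, intervalIntegral.integral_same, neg_zero]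
    · exfalso
      have hcond' := hcond x (α h) hc hz1
      apply hcond'
      have hI : ∫ s in (0:ℝ)..(α h), α (w (φ s x)) = -(α h) := by linarith [hαh]
      rw [hI]
      field_simp
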